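/- Let (Ω, d) be a metric space. The map x ↦ M{x}, sending a point to the function t ↦ {x}^t (open ball of radius t, with value {x} at t = 0), is injective, and the interaction time τ(M{x}, M{y}) = d(x, y) makes the image an isometric copy of (Ω, d). -/
import Mathlib


open Metric

/-- `M{x} : [0,∞) → 2^Ω`, with `(M{x})(0) = {x}` and `(M{x})(t)` the open ball. -/
noncomputable def Msing {Ω : Type*} [MetricSpace Ω] (x : Ω) : ℝ → Set Ω :=
  fun t => if t = 0 then {x} else Metric.ball x t

/-- `t_{αβ}` for `α = M{x}`, `β = M{y}` (`inf ∅ = 0` by Lean's `sInf` convention). -/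
noncomputable def tab {Ω : Type*} [MetricSpace Ω] (x y : Ω) : ℝ :=
  sInf {t : ℝ | 0 ≤ t ∧ ∀ ε > 0, (Msing x t ∩ Metric.ball y ε).Nonempty}

/-- The interaction time `τ(M{x}, M{y}) = max{t_{αβ}, t_{βα}}`. -/
noncomputable def tau {Ω : Type*} [MetricSpace Ω] (x y : Ω) : ℝ :=
  max (tab x y) (tab y x)

lemma mem_tab_set {Ω : Type*} [MetricSpace Ω] (x y : Ω) {t : ℝ} (ht : dist x y < t) :
    t ∈ {t : ℝ | 0 ≤ t ∧ ∀ ε > 0, (Msing x t ∩ Metric.ball y ε).Nonempty} := by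
  have ht0 : 0 < t := lt_of_le_of_lt dist_nonneg ht
  refine ⟨ht0.le, fun ε hε => ⟨y, ?_, mem_ball_self hε⟩⟩
  simp [Msing, ht0.ne', dist_comm, ht]

lemma tab_eq_dist {Ω : Type*} [MetricSpace Ω] (x y : Ω) : tab x y = dist x y := by
  have hbdd : BddBelow {t : ℝ | 0 ≤ t ∧ ∀ ε > 0, (Msing x t ∩ Metric.ball y ε).Nonempty} :=
    ⟨0, fun t ht => ht.1⟩
  have hne : (dist x y + 1) ∈ _ := mem_tab_set x y (by linarith [dist_nonneg (x := x) (y := y)])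
  apply le_antisymm
  · apply le_of_forall_pos_le_add
    intro ε hε
    exact csInf_le hbdd (mem_tab_set x y (by linarith))
  · apply le_csInf ⟨_, hne⟩
    rintro t ⟨ht0, ht⟩
    rcases eq_or_lt_of_le ht0 with h | h
    · -- t = 0 : then x ∈ every ball y ε, so x = y
      have : ∀ ε > 0, dist x y < ε := by
        intro ε hε
        obtain ⟨z, hz1, hz2⟩ := ht ε hε
        simp [Msing, ← h] at hz1
        subst hz1
        simpa [dist_comm] using hz2
      have : dist x y ≤ 0 := le_of_forall_pos_le_add fun c hc => by simpa using (this c hc).le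
      linarith
    · -- t > 0 : d(x,y) < t + ε for all ε
      apply le_of_forall_pos_le_add
      intro ε hε
      obtain ⟨z, hz1, hz2⟩ := ht ε hε
      simp [Msing, h.ne'] at hz1
      calc dist x y ≤ dist x z + dist z y := dist_triangle _ _ _
        _ ≤ t + ε := by rw [dist_comm x z]; exact add_le_add hz1.le hz2.le

/-- The map `x ↦ M{x}` is injective, and the interaction time turns its image
into an isometric copy of `(Ω, d)`: `τ(M{x}, M{y}) = d(x, y)`. -/
theorem Msing_injective_and_isometric {Ω : Type*} [MetricSpace Ω] :
    Function.Injective (Msing (Ω := Ω)) ∧ ∀ x y : Ω, tau x y = dist x y := by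
  constructor
  · intro x y h
    have := congrFun h 0
    simpa [Msing] using this
  · intro x y
    simp [tau, tab_eq_dist, dist_comm y x]
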